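/- Let $R$ be a Noetherian ring and $M$ a finitely generated torsion-free $R$-module. The following are equivalent: (1) $\widetilde{M}$ is a finitely generated $R$-module; (2) $\mathrm{U}(aM)=a\widetilde{M}$ for some non-zerodivisor $a$ of $R$; (3) $(M:_R\widetilde{M})$ contains a non-zerodivisor of $R$. When this holds, $\widetilde{M}=\frac{\mathrm{U}(aM)}{a}$ for some non-zerodivisor $a$. -/

import Mathlib

open Pointwise

/-- The height of an ideal. -/
noncomputable def idealHt {R : Type*} [CommRing R] (I : Ideal R) : ℕ∞ :=
  ⨅ p ∈ {p : PrimeSpectrum R | I ≤ p.asIdeal}, Order.height p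

/-- `Min¹_R(M/aM)`: the height-one minimal primes of the support of `M/aM`
(equivalently, of the annihilator of `M/aM`, as `M` is finitely generated). -/
noncomputable def minOne (R : Type*) [CommRing R] (M : Type*) [AddCommGroup M]
    [Module R M] (a : R) : Set (Ideal R) :=
  {p | p ∈ (Module.annihilator R (M ⧸ (a • (⊤ : Submodule R M)))).minimalPrimes ∧
    idealHt p = 1}

/-- `U(aM)`: the intersection of the primary components of `aM` in `M` at the
height-one minimal primes of `M/aM` (the primary component at a minimal prime
`p` being the saturation `{x ∈ M | sx ∈ aM for some s ∉ p}`); by convention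
`U(aM) = M` when there are no such primes. -/
noncomputable def Uset (R : Type*) [CommRing R] (M : Type*) [AddCommGroup M]
    [Module R M] (a : R) : Set M :=
  ⋂ p ∈ minOne R M a, {x : M | ∃ s, s ∉ p ∧ s • x ∈ (a • (⊤ : Submodule R M))}

section Aux

variable {R : Type*} [CommRing R] {M : Type*} [AddCommGroup M] [Module R M]

lemma mem_smul_top {a : R} {x : M} :
    x ∈ a • (⊤ : Submodule R M) ↔ ∃ m : M, a • m = x := by
  constructor
  · intro h
    rw [← SetLike.mem_coe, Submodule.coe_pointwise_smul, Set.mem_smul_set] at h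
    obtain ⟨m, -, rfl⟩ := h
    exact ⟨m, rfl⟩
  · rintro ⟨m, rfl⟩
    exact Submodule.smul_mem_pointwise_smul m a ⊤ trivial

lemma idealHt_of_isPrime (p : Ideal R) (hp : p.IsPrime) :
    idealHt p = Order.height (⟨p, hp⟩ : PrimeSpectrum R) := by
  apply le_antisymm
  · exact iInf₂_le (⟨p, hp⟩ : PrimeSpectrum R) (le_refl p)
  · exact le_iInf₂ fun q hq =>
      Order.height_mono ((PrimeSpectrum.asIdeal_le_asIdeal (⟨p, hp⟩ : PrimeSpectrum R) q).mp hq)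

lemma nzd_not_mem_minimalPrime {a : R} (ha : a ∈ nonZeroDivisors R) {q : Ideal R}
    (hq : q ∈ minimalPrimes R) : a ∉ q := by
  intro haq
  haveI : q.IsPrime := hq.1.1
  have hnil : IsNilpotent (algebraMap R (Localization q.primeCompl) a) :=
    absurd ha (notMem_nonZeroDivisors_of_mem_mem_minimalPrimes haq hq)
  obtain ⟨n, hn⟩ := hnil
  rw [← map_pow] at hn
  obtain ⟨s, hs⟩ := (IsLocalization.map_eq_zero_iff q.primeCompl _ _).mp hn
  have hs0 : (s : R) = 0 := (pow_mem ha n).2 (s : R) hs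
  exact s.2 (hs0 ▸ q.zero_mem)

lemma one_le_heightPS {p q : Ideal R} (hp : p.IsPrime) (hq : q.IsPrime) (h : q < p) :
    1 ≤ Order.height (⟨p, hp⟩ : PrimeSpectrum R) := by
  have hlt : (⟨q, hq⟩ : PrimeSpectrum R) < ⟨p, hp⟩ :=
    lt_of_le_of_ne ((PrimeSpectrum.asIdeal_le_asIdeal _ _).mp h.le)
      (fun hEq => h.ne (congrArg PrimeSpectrum.asIdeal hEq))
  have h2 := Order.length_le_height
    (p := (RelSeries.singleton {(x, y) : PrimeSpectrum R × PrimeSpectrum R | x < y} ⟨q, hq⟩).snoc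
      ⟨p, hp⟩ (by simpa using hlt)) (x := (⟨p, hp⟩ : PrimeSpectrum R)) (by simp)
  simpa using h2

lemma two_le_heightPS {p q q' : Ideal R} (hp : p.IsPrime) (hq : q.IsPrime) (hq' : q'.IsPrime)
    (h1 : q' < q) (h2 : q < p) : 2 ≤ Order.height (⟨p, hp⟩ : PrimeSpectrum R) := by
  have hlt1 : (⟨q', hq'⟩ : PrimeSpectrum R) < ⟨q, hq⟩ :=
    lt_of_le_of_ne ((PrimeSpectrum.asIdeal_le_asIdeal _ _).mp h1.le)
      (fun hEq => h1.ne (congrArg PrimeSpectrum.asIdeal hEq))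
  have hlt2 : (⟨q, hq⟩ : PrimeSpectrum R) < ⟨p, hp⟩ :=
    lt_of_le_of_ne ((PrimeSpectrum.asIdeal_le_asIdeal _ _).mp h2.le)
      (fun hEq => h2.ne (congrArg PrimeSpectrum.asIdeal hEq))
  have h3 := Order.length_le_height
    (p := ((RelSeries.singleton {(x, y) : PrimeSpectrum R × PrimeSpectrum R | x < y} ⟨q', hq'⟩).snoc
      ⟨q, hq⟩ (by simpa using hlt1)).snoc ⟨p, hp⟩ (by simpa using hlt2))
    (x := (⟨p, hp⟩ : PrimeSpectrum R)) (by simp)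
  simpa using h3

lemma mk_inj (htf : ∀ r ∈ nonZeroDivisors R, Function.Injective fun x : M => r • x) :
    Function.Injective (LocalizedModule.mkLinearMap (nonZeroDivisors R) M) := by
  intro x y h
  rw [LocalizedModule.mkLinearMap_apply, LocalizedModule.mkLinearMap_apply,
    LocalizedModule.mk_eq] at h
  obtain ⟨u, hu⟩ := h
  simp only [one_smul] at hu
  exact htf u u.2 hu

lemma smul_bij {a : R} (ha : a ∈ nonZeroDivisors R) :
    Function.Bijective (fun z : LocalizedModule (nonZeroDivisors R) M => a • z) := by
  constructor
  · have h0 : ∀ z : LocalizedModule (nonZeroDivisors R) M, a • z = 0 → z = 0 := by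
      intro z
      induction z using LocalizedModule.induction_on with
      | _ m s =>
        intro h
        rw [LocalizedModule.smul'_mk] at h
        rw [show (0 : LocalizedModule (nonZeroDivisors R) M) = LocalizedModule.mk 0 1 from
          (LocalizedModule.zero_mk 1).symm] at h ⊢
        rw [LocalizedModule.mk_eq] at h ⊢
        obtain ⟨u, hu⟩ := h
        refine ⟨u * ⟨a, ha⟩, ?_⟩
        simp only [one_smul, smul_zero] at hu ⊢
        rw [mul_smul]
        exact hu
    intro z w h
    have hz : a • z = a • w := h
    have := h0 (z - w) (by rw [smul_sub, hz, sub_self])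
    exact sub_eq_zero.mp this
  · intro z
    induction z using LocalizedModule.induction_on with
    | _ m s =>
      refine ⟨LocalizedModule.mk m (⟨a, ha⟩ * s), ?_⟩
      show a • LocalizedModule.mk m (⟨a, ha⟩ * s) = LocalizedModule.mk m s
      rw [LocalizedModule.smul'_mk]
      exact LocalizedModule.mk_cancel_common_left ⟨a, ha⟩ s m

lemma uset_submodule (a : R) : ∃ N : Submodule R M, (N : Set M) = Uset R M a := by
  refine ⟨{ carrier := Uset R M a, add_mem' := ?_, zero_mem' := ?_, smul_mem' := ?_ }, rfl⟩
  · intro x y hx hy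
    rw [Uset, Set.mem_iInter₂] at hx hy ⊢
    intro p hp
    haveI hprime : p.IsPrime := hp.1.1.1
    obtain ⟨s, hs, hsx⟩ := hx p hp
    obtain ⟨t, ht, hty⟩ := hy p hp
    refine ⟨s * t, fun hmem => ((hprime.mem_or_mem hmem).elim hs ht), ?_⟩
    have heq : (s * t) • (x + y) = t • (s • x) + s • (t • y) := by
      rw [smul_add, mul_smul s t y, mul_comm s t, mul_smul t s x]
    rw [heq]
    exact Submodule.add_mem _ (Submodule.smul_mem _ _ hsx) (Submodule.smul_mem _ _ hty)
  · refine Set.mem_iInter₂.mpr fun p hp => ?_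
    haveI hprime : p.IsPrime := hp.1.1.1
    exact ⟨1, fun h => hprime.ne_top (Ideal.eq_top_of_isUnit_mem _ h isUnit_one),
      by rw [smul_zero]; exact Submodule.zero_mem _⟩
  · intro r x hx
    refine Set.mem_iInter₂.mpr fun p hp => ?_
    obtain ⟨s, hs, hsx⟩ := Set.mem_iInter₂.mp hx p hp
    exact ⟨s, hs, by rw [smul_comm]; exact Submodule.smul_mem _ _ hsx⟩

lemma claimU {a : R}
    (htf : ∀ r ∈ nonZeroDivisors R, Function.Injective fun x : M => r • x)
    (T : Set (LocalizedModule (nonZeroDivisors R) M))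
    (hT : T = {f | ∃ I : Ideal R, 2 ≤ idealHt I ∧ ∀ i ∈ I,
      i • f ∈ LinearMap.range (LocalizedModule.mkLinearMap (nonZeroDivisors R) M)})
    (ha : a ∈ nonZeroDivisors R)
    (haT : ∀ f ∈ T, a • f ∈ Set.range (LocalizedModule.mkLinearMap (nonZeroDivisors R) M)) :
    (LocalizedModule.mkLinearMap (nonZeroDivisors R) M) '' Uset R M a = a • T := by
  apply Set.Subset.antisymm
  · -- mk '' Uset ⊆ a • T
    rintro _ ⟨x, hx, rfl⟩
    rw [Set.mem_smul_set]
    refine ⟨LocalizedModule.mk x ⟨a, ha⟩, ?_, ?_⟩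
    · rw [hT]
      refine ⟨(a • (⊤ : Submodule R M)).colon (Submodule.span R {x}), ?_, ?_⟩
      · -- 2 ≤ idealHt J
        refine le_iInf₂ fun q hq => ?_
        haveI hqp : q.asIdeal.IsPrime := q.2
        set A := Module.annihilator R (M ⧸ (a • (⊤ : Submodule R M))) with hA
        have hAJ : A ≤ (a • (⊤ : Submodule R M)).colon (Submodule.span R {x}) := by
          intro r hr
          rw [Submodule.mem_colon_span_singleton]
          have := Module.mem_annihilator.mp hr (Submodule.Quotient.mk x)
          rwa [← Submodule.Quotient.mk_smul, Submodule.Quotient.mk_eq_zero] at this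
        have haA : a ∈ A := by
          rw [Module.mem_annihilator]
          intro m
          obtain ⟨m', rfl⟩ := Submodule.Quotient.mk_surjective _ m
          rw [← Submodule.Quotient.mk_smul, Submodule.Quotient.mk_eq_zero]
          exact Submodule.smul_mem_pointwise_smul m' a ⊤ trivial
        have hAq : A ≤ q.asIdeal := le_trans hAJ hq
        obtain ⟨Q, hQmin, hQle⟩ := Ideal.exists_minimalPrimes_le hAq
        haveI hQp : Q.IsPrime := hQmin.1.1
        have haQ : a ∈ Q := hQmin.1.2 haA
        obtain ⟨q₀, hq₀min, hq₀le⟩ := Ideal.exists_minimalPrimes_le (bot_le : (⊥ : Ideal R) ≤ Q)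
        haveI hq₀p : q₀.IsPrime := hq₀min.1.1
        have haq₀ : a ∉ q₀ := nzd_not_mem_minimalPrime ha hq₀min
        have hq₀Q : q₀ < Q := lt_of_le_of_ne hq₀le (fun h => haq₀ (h ▸ haQ))
        rcases hQle.eq_or_lt with hEq | hQlt
        · -- Q = q.asIdeal
          by_cases h1 : idealHt q.asIdeal = 1
          · exfalso
            have hpmem : q.asIdeal ∈ minOne R M a := ⟨hEq ▸ hQmin, h1⟩
            obtain ⟨s, hs, hsx⟩ := Set.mem_iInter₂.mp hx q.asIdeal hpmem
            exact hs (hq (Submodule.mem_colon_span_singleton.mpr hsx))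
          · have hge1 : 1 ≤ Order.height q := one_le_heightPS hqp hq₀p (hEq ▸ hq₀Q)
            have hne1 : Order.height q ≠ 1 :=
              fun h => h1 ((idealHt_of_isPrime q.asIdeal hqp).trans h)
            have hlt : 1 < Order.height q := lt_of_le_of_ne hge1 (Ne.symm hne1)
            calc (2 : ℕ∞) = 1 + 1 := by norm_num
            _ ≤ Order.height q := (ENat.add_one_le_iff (by norm_num)).mpr hlt
        · exact two_le_heightPS hqp hQp hq₀p hq₀Q hQlt
      · -- ∀ j ∈ J, j • f ∈ range mk
        intro j hj
        rw [Submodule.mem_colon_span_singleton] at hj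
        obtain ⟨m, hm⟩ := mem_smul_top.mp hj
        refine ⟨m, ?_⟩
        rw [LocalizedModule.mkLinearMap_apply]
        rw [LocalizedModule.smul'_mk, ← hm]
        rw [show a • m = (⟨a, ha⟩ : nonZeroDivisors R) • m from rfl]
        exact (LocalizedModule.mk_cancel _ _).symm
    · rw [LocalizedModule.smul'_mk, LocalizedModule.mkLinearMap_apply]
      rw [show a • x = (⟨a, ha⟩ : nonZeroDivisors R) • x from rfl]
      exact LocalizedModule.mk_cancel _ _
  · -- a • T ⊆ mk '' Uset
    rintro _ ⟨f, hf, rfl⟩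
    obtain ⟨x, hxf⟩ := haT f hf
    refine ⟨x, ?_, hxf⟩
    rw [Uset, Set.mem_iInter₂]
    intro p hp
    haveI hprime : p.IsPrime := hp.1.1.1
    obtain ⟨I, hI2, hIf⟩ := hT ▸ hf
    have hInp : ¬ I ≤ p := by
      intro hle
      have : idealHt I ≤ Order.height (⟨p, hprime⟩ : PrimeSpectrum R) :=
        iInf₂_le (⟨p, hprime⟩ : PrimeSpectrum R) hle
      rw [← idealHt_of_isPrime p hprime, hp.2] at this
      exact absurd (le_trans hI2 this) (by norm_num)
    obtain ⟨s, hsI, hsp⟩ := SetLike.not_le_iff_exists.mp hInp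
    obtain ⟨y, hy⟩ := hIf s hsI
    refine ⟨s, hsp, mem_smul_top.mpr ⟨y, mk_inj htf ?_⟩⟩
    rw [map_smul, map_smul, hxf, hy, smul_comm]

end Aux

/-- for a finitely generated torsion-free module `M` over a
Noetherian ring `R`, the following are equivalent: (1) `M̃` is a finitely
generated `R`-module; (2) `U(aM) = aM̃` for some non-zerodivisor `a`;
(3) `M :_R M̃` contains a non-zerodivisor. In that case
`M̃ = U(aM)/a` for some non-zerodivisor `a`. -/
theorem stmt15 {R : Type*} [CommRing R] [IsNoetherianRing R]
    {M : Type*} [AddCommGroup M] [Module R M] [Module.Finite R M]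
    (htf : ∀ r ∈ nonZeroDivisors R, Function.Injective fun x : M => r • x)
    (T : Set (LocalizedModule (nonZeroDivisors R) M))
    (hT : T = {f | ∃ I : Ideal R, 2 ≤ idealHt I ∧ ∀ i ∈ I,
      i • f ∈ LinearMap.range (LocalizedModule.mkLinearMap (nonZeroDivisors R) M)}) :
    ((∃ s : Finset (LocalizedModule (nonZeroDivisors R) M),
        T = ↑(Submodule.span R (↑s : Set (LocalizedModule (nonZeroDivisors R) M)))) ↔
      (∃ a ∈ nonZeroDivisors R,
        (LocalizedModule.mkLinearMap (nonZeroDivisors R) M) '' Uset R M a = a • T)) ∧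
    ((∃ a ∈ nonZeroDivisors R,
        (LocalizedModule.mkLinearMap (nonZeroDivisors R) M) '' Uset R M a = a • T) ↔
      (∃ a ∈ nonZeroDivisors R, ∀ f ∈ T,
        a • f ∈ Set.range (LocalizedModule.mkLinearMap (nonZeroDivisors R) M))) ∧
    ((∃ s : Finset (LocalizedModule (nonZeroDivisors R) M),
        T = ↑(Submodule.span R (↑s : Set (LocalizedModule (nonZeroDivisors R) M)))) →
      ∃ a ∈ nonZeroDivisors R,
        T = {f | a • f ∈ (LocalizedModule.mkLinearMap (nonZeroDivisors R) M) '' Uset R M a}) := by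
  classical
  have h13 : (∃ s : Finset (LocalizedModule (nonZeroDivisors R) M),
      T = ↑(Submodule.span R (↑s : Set (LocalizedModule (nonZeroDivisors R) M)))) →
      ∃ a ∈ nonZeroDivisors R, ∀ f ∈ T,
        a • f ∈ Set.range (LocalizedModule.mkLinearMap (nonZeroDivisors R) M) := by
    rintro ⟨s, hsT⟩
    have hch : ∀ f : LocalizedModule (nonZeroDivisors R) M, ∃ c, c ∈ nonZeroDivisors R ∧
        c • f ∈ LinearMap.range (LocalizedModule.mkLinearMap (nonZeroDivisors R) M) := by
      intro f
      induction f using LocalizedModule.induction_on with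
      | _ m t =>
        refine ⟨(t : R), t.2, ⟨m, ?_⟩⟩
        rw [LocalizedModule.mkLinearMap_apply, LocalizedModule.smul'_mk]
        exact ((LocalizedModule.mk_cancel t m).symm : _)
    choose c hc1 hc2 using hch
    refine ⟨∏ f ∈ s, c f, prod_mem (fun f _ => hc1 f), ?_⟩
    intro f hf
    rw [hsT, SetLike.mem_coe] at hf
    have key : (∏ g ∈ s, c g) • f ∈
        LinearMap.range (LocalizedModule.mkLinearMap (nonZeroDivisors R) M) := by
      induction hf using Submodule.span_induction with
      | mem x hx =>
        rw [← Finset.prod_erase_mul s c hx, mul_smul]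
        exact Submodule.smul_mem _ _ (hc2 x)
      | zero =>
        rw [smul_zero]; exact Submodule.zero_mem _
      | add x y hx hy ihx ihy =>
        rw [smul_add]; exact Submodule.add_mem _ ihx ihy
      | smul r x hx ih =>
        rw [smul_comm]; exact Submodule.smul_mem _ _ ih
    obtain ⟨y, hy⟩ := key
    exact ⟨y, hy⟩
  have h31 : (∃ a ∈ nonZeroDivisors R, ∀ f ∈ T,
      a • f ∈ Set.range (LocalizedModule.mkLinearMap (nonZeroDivisors R) M)) →
      ∃ a ∈ nonZeroDivisors R,
        (LocalizedModule.mkLinearMap (nonZeroDivisors R) M) '' Uset R M a = a • T := by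
    rintro ⟨a, ha, haT⟩
    exact ⟨a, ha, claimU htf T hT ha haT⟩
  have h23 : (∃ a ∈ nonZeroDivisors R,
      (LocalizedModule.mkLinearMap (nonZeroDivisors R) M) '' Uset R M a = a • T) →
      ∃ a ∈ nonZeroDivisors R, ∀ f ∈ T,
        a • f ∈ Set.range (LocalizedModule.mkLinearMap (nonZeroDivisors R) M) := by
    rintro ⟨a, ha, hU⟩
    refine ⟨a, ha, fun f hf => ?_⟩
    have h1 : a • f ∈ a • T := Set.smul_mem_smul_set hf
    rw [← hU] at h1
    obtain ⟨x, -, hx⟩ := h1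
    exact ⟨x, hx⟩
  have h21 : (∃ a ∈ nonZeroDivisors R,
      (LocalizedModule.mkLinearMap (nonZeroDivisors R) M) '' Uset R M a = a • T) →
      ∃ s : Finset (LocalizedModule (nonZeroDivisors R) M),
        T = ↑(Submodule.span R (↑s : Set (LocalizedModule (nonZeroDivisors R) M))) := by
    rintro ⟨a, ha, hU⟩
    obtain ⟨N, hN⟩ := uset_submodule (R := R) (M := M) a
    obtain ⟨G, hG⟩ := IsNoetherian.noetherian N
    have hbij : Function.Bijective
        (LinearMap.lsmul R (LocalizedModule (nonZeroDivisors R) M) a) := smul_bij ha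
    let e := LinearEquiv.ofBijective _ hbij
    have hTeq : T = ⇑e ⁻¹' (a • T) := by
      ext z
      simp only [Set.mem_preimage]
      constructor
      · intro hz
        exact Set.smul_mem_smul_set hz
      · intro hz
        obtain ⟨w, hw, hww⟩ := hz
        have hwz : w = z := hbij.1 hww
        exact hwz ▸ hw
    refine ⟨G.image (fun g => e.symm (LocalizedModule.mkLinearMap (nonZeroDivisors R) M g)), ?_⟩
    rw [hTeq, ← hU, ← hN]
    have step1 : ⇑e ⁻¹' ((LocalizedModule.mkLinearMap (nonZeroDivisors R) M) '' ↑N) =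
        ((Submodule.comap (e : LocalizedModule (nonZeroDivisors R) M →ₗ[R]
            LocalizedModule (nonZeroDivisors R) M)
          (N.map (LocalizedModule.mkLinearMap (nonZeroDivisors R) M))) :
            Set (LocalizedModule (nonZeroDivisors R) M)) := by
      rw [Submodule.comap_coe, Submodule.map_coe]
      rfl
    rw [step1, Submodule.comap_equiv_eq_map_symm, ← hG, Submodule.map_span, Submodule.map_span,
      Finset.coe_image, Set.image_image]
    rfl
  refine ⟨⟨fun h1 => h31 (h13 h1), h21⟩, ⟨h23, h31⟩, ?_⟩
  intro h1
  obtain ⟨a, ha, haT⟩ := h13 h1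
  have hU := claimU htf T hT ha haT
  refine ⟨a, ha, ?_⟩
  ext f
  constructor
  · intro hf
    have h3 : a • f ∈ a • T := Set.smul_mem_smul_set hf
    rw [← hU] at h3
    exact h3
  · intro hf
    have h2 : a • f ∈ (LocalizedModule.mkLinearMap (nonZeroDivisors R) M) '' Uset R M a := hf
    rw [hU] at h2
    obtain ⟨w, hw, hww⟩ := h2
    exact ((smul_bij ha).1 hww : w = f) ▸ hw
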